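/- Let k ≠ 0 and define the linear logarithmic intensity profile f(u) = k·u. Let x : ℝ → ℝ be twice continuously differentiable with |x''(s)| ≤ a_max for all s, let f_x, Z, C > 0 be constants, set μ(s) = −(f_x/Z)·x(s), and let K ⊂ ℤ² be a finite set of N_u·N_v pixels. Define N_net = (1/C)·Σ_{(u,v)∈K} [f(u + μ(t+Δt)) − f(u + μ(t))] and M_Linear = −(N_u N_v f_x k/(C Z))·x'(t). Then for every Δt > 0, |N_net − M_Linear·Δt| ≤ |k|·(N_u N_v/(2C))·(f_x/Z)·a_max·Δt²; that is, the net event count is proportional to the instantaneous velocity x'(t), the spatial error vanishes entirely, and the temporal error depends only on the acceleration bound a_max. -/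

import Mathlib

open Real Finset Set

lemma taylor_bound {x : ℝ → ℝ} (hx : ContDiff ℝ 2 x) {a_max : ℝ}
    (ha : ∀ s, |deriv (deriv x) s| ≤ a_max) (t Δt : ℝ) (hΔt : 0 < Δt) :
    |x (t + Δt) - x t - deriv x t * Δt| ≤ a_max * Δt ^ 2 / 2 := by
  have hlt : t < t + Δt := by linarith
  have hx2 : ContDiff ℝ (1 + 1) x := by norm_num; exact hx
  have hder : ContDiff ℝ 1 (deriv x) := (contDiff_succ_iff_deriv.mp hx2).2.2
  have hud := uniqueDiffOn_Icc hlt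
  have hmem : ∀ y ∈ Ioo t (t + Δt), Icc t (t + Δt) ∈ nhds y := fun y hy =>
    Icc_mem_nhds hy.1 hy.2
  have hEq : ∀ y ∈ Ioo t (t + Δt),
      iteratedDerivWithin 1 x (Icc t (t + Δt)) y = deriv x y := by
    intro y hy
    rw [iteratedDerivWithin_one,
      derivWithin_of_mem_nhds (hmem y hy)]
  obtain ⟨c, hc, hcEq⟩ := taylor_mean_remainder_lagrange (n := 1) hlt.ne
    (by rw [uIcc_of_le hlt.le]; exact (hx.of_le (by norm_num)).contDiffOn)
    (by
      rw [uIcc_of_le hlt.le, uIoo_of_le hlt.le]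
      apply DifferentiableOn.congr (f := deriv x)
        ((hder.differentiable (by norm_num)).differentiableOn)
      exact hEq)
  rw [uIcc_of_le hlt.le] at hcEq
  rw [uIoo_of_le hlt.le] at hc
  have h2 : iteratedDerivWithin (1 + 1) x (Icc t (t + Δt)) c = deriv (deriv x) c := by
    rw [iteratedDerivWithin_succ]
    have he : iteratedDerivWithin 1 x (Icc t (t + Δt)) =ᶠ[nhdsWithin c (Icc t (t + Δt))]
        deriv x := by
      exact Filter.eventuallyEq_of_mem (nhdsWithin_le_nhds (Ioo_mem_nhds hc.1 hc.2)) hEq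
    rw [Filter.EventuallyEq.derivWithin_eq he (hEq c hc),
      derivWithin_of_mem_nhds (hmem c hc)]
  have hEq0 : iteratedDerivWithin 1 x (Icc t (t + Δt)) t = deriv x t := by
    rw [iteratedDerivWithin_one,
      DifferentiableAt.derivWithin (hx.differentiable (by norm_num) t)
        (hud t (left_mem_Icc.mpr hlt.le))]
  have hT : taylorWithinEval x 1 (Icc t (t + Δt)) t (t + Δt) = x t + deriv x t * Δt := by
    simp [taylorWithinEval_succ, taylor_within_zero_eval, hEq0]
    ring
  rw [hT, h2] at hcEq
  have : x (t + Δt) - x t - deriv x t * Δt = deriv (deriv x) c * Δt ^ 2 / 2 := by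
    rw [show x (t + Δt) - x t - deriv x t * Δt
        = x (t + Δt) - (x t + deriv x t * Δt) by ring, hcEq]
    norm_num
  rw [this, abs_div, abs_mul]
  have h1 : |deriv (deriv x) c| ≤ a_max := ha c
  have h2' : |Δt ^ 2| = Δt ^ 2 := abs_of_nonneg (by positivity)
  rw [h2', abs_of_nonneg (by norm_num : (0:ℝ) ≤ 2)]
  gcongr


/-- **Example 2 (Linear profile).** For the linear logarithmic intensity profile
`f u = k * u`, the net event count is proportional to the instantaneous velocity `x' t`,
the spatial error vanishes entirely, and the temporal error depends only on the
acceleration bound `a_max`. -/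
theorem net_event_count_linear_profile
    (k : ℝ) (hk : k ≠ 0)
    (f : ℝ → ℝ) (hf : ∀ u : ℝ, f u = k * u)
    (x : ℝ → ℝ) (hx : ContDiff ℝ 2 x)
    (a_max : ℝ)
    (ha : ∀ s : ℝ, |deriv (deriv x) s| ≤ a_max)
    (f_x Z C : ℝ) (hfx : 0 < f_x) (hZ : 0 < Z) (hC : 0 < C)
    (μ : ℝ → ℝ) (hμ : ∀ s : ℝ, μ s = -(f_x / Z) * x s)
    (N_u N_v : ℕ) (K : Finset (ℤ × ℤ)) (hcard : K.card = N_u * N_v)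
    (t Δt : ℝ) (hΔt : 0 < Δt)
    (N_net M_Linear : ℝ)
    (hN : N_net = (1 / C) * ∑ p ∈ K, (f ((p.1 : ℝ) + μ (t + Δt)) - f ((p.1 : ℝ) + μ t)))
    (hM : M_Linear = -((N_u : ℝ) * (N_v : ℝ) * f_x * k / (C * Z)) * deriv x t) :
    |N_net - M_Linear * Δt| ≤
      |k| * ((N_u : ℝ) * (N_v : ℝ) / (2 * C)) * (f_x / Z) * a_max * Δt ^ 2 := by
  have hD := taylor_bound hx ha t Δt hΔt
  have ha0 : 0 ≤ a_max := le_trans (abs_nonneg _) (ha 0)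
  have hterm : ∀ p ∈ K, f ((p.1 : ℝ) + μ (t + Δt)) - f ((p.1 : ℝ) + μ t)
      = k * (μ (t + Δt) - μ t) := by
    intro p _
    rw [hf, hf]; ring
  have key : N_net - M_Linear * Δt
      = -((N_u : ℝ) * (N_v : ℝ) * k * f_x / (C * Z))
        * (x (t + Δt) - x t - deriv x t * Δt) := by
    rw [hN, hM, Finset.sum_congr rfl hterm, Finset.sum_const, hcard,
      hμ (t + Δt), hμ t]
    push_cast
    field_simp
    linear_combination (k * f_x * N_u * N_v * (x t - x (t + Δt))) * (mul_inv_cancel₀ hZ.ne')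
  rw [key, abs_mul, abs_neg, abs_div, abs_mul, abs_mul, abs_mul,
    abs_of_pos hfx, abs_of_pos (mul_pos hC hZ),
    abs_of_nonneg (Nat.cast_nonneg N_u : (0:ℝ) ≤ N_u),
    abs_of_nonneg (Nat.cast_nonneg N_v : (0:ℝ) ≤ N_v)]
  calc (N_u : ℝ) * (N_v : ℝ) * |k| * f_x / (C * Z) * |x (t + Δt) - x t - deriv x t * Δt|
      ≤ (N_u : ℝ) * (N_v : ℝ) * |k| * f_x / (C * Z) * (a_max * Δt ^ 2 / 2) := by
        gcongr
    _ = |k| * ((N_u : ℝ) * (N_v : ℝ) / (2 * C)) * (f_x / Z) * a_max * Δt ^ 2 := by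
        field_simp
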